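/- Define LP_{(j)}(n) to be ψ_{{0,1,...,n-1}∖{j}} (the Lascoux coefficient of the complement of {j} in {0,...,n-1}) if j < n, and 0 otherwise. Then LP_{(j)}(n) = C(n, j+1) for all n ≥ 0. -/

import Mathlib

open scoped BigOperators

/-- The Lascoux coefficient `ψ_I` of a strictly increasing tuple `I : Fin r → ℕ`, via the
Pascal-minor formula `ψ_I = ∑_{J ≤ I} det(C(i_k, j_l))` (equivalent to the defining
expansion of `h_d({x_i+x_j})` in Schur polynomials). -/
def psi (r : ℕ) (I : Fin r → ℕ) : ℤ :=
  ∑ J ∈ (Fintype.piFinset fun _ : Fin r => Finset.range ((∑ k, I k) + 1)).filter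
      (fun J => (∀ k l : Fin r, k < l → J k < J l) ∧ ∀ k, J k ≤ I k),
    Matrix.det (Matrix.of fun k l : Fin r => ((I k).choose (J l) : ℤ))

/-- `ψ_I` for a finite set `I` of nonnegative integers. -/
def psiF (I : Finset ℕ) : ℤ :=
  psi I.card fun k => ((I.orderIsoOfFin rfl) k : ℕ)

/-! ### Auxiliary development -/

/-- The increasing enumeration of `{0, …, m} \ {t}` (clamped when `t ≥ m`). -/
private def Jf (m t : ℕ) : Fin m → ℕ := fun k => if (k:ℕ) < t then (k:ℕ) else (k:ℕ)+1

/-- The Pascal matrix. -/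
private def Pas (m : ℕ) : Matrix (Fin (m+1)) (Fin (m+1)) ℤ :=
  Matrix.of fun i k => ((i:ℕ).choose (k:ℕ) : ℤ)

/-- Its inverse. -/
private def PasInv (m : ℕ) : Matrix (Fin (m+1)) (Fin (m+1)) ℤ :=
  Matrix.of fun i k => (-1)^((i:ℕ)+(k:ℕ)) * ((i:ℕ).choose (k:ℕ) : ℤ)

private lemma pas_mul (m : ℕ) : Pas m * PasInv m = 1 := by
  ext i k
  rw [Matrix.mul_apply]
  simp only [Pas, PasInv, Matrix.of_apply, Matrix.one_apply]
  have key : ∀ l : Fin (m+1),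
      ((i:ℕ).choose (l:ℕ) : ℤ) * ((-1)^((l:ℕ)+(k:ℕ)) * ((l:ℕ).choose (k:ℕ) : ℤ))
        = if (k:ℕ) ≤ (l:ℕ) ∧ (l:ℕ) ≤ (i:ℕ) then
            ((-1)^((l:ℕ)+(k:ℕ)) * (((i:ℕ).choose (l:ℕ) : ℕ) * ((l:ℕ).choose (k:ℕ) : ℕ) : ℕ) : ℤ)
          else 0 := by
    intro l
    split_ifs with h
    · push_cast; ring
    · rcases Nat.lt_or_ge (l:ℕ) (k:ℕ) with h' | h'
      · rw [Nat.choose_eq_zero_of_lt h']; push_cast; ring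
      · have : (i:ℕ) < (l:ℕ) := by omega
        rw [Nat.choose_eq_zero_of_lt this]; push_cast; ring
  rw [Finset.sum_congr rfl fun l _ => key l]
  rw [Fin.sum_univ_eq_sum_range (fun l =>
    (if (k:ℕ) ≤ l ∧ l ≤ (i:ℕ) then
      ((-1)^(l+(k:ℕ)) * (((i:ℕ).choose l : ℕ) * ((l).choose (k:ℕ) : ℕ) : ℕ) : ℤ) else 0))]
  rw [← Finset.sum_filter]
  have hfil : (Finset.range (m+1)).filter (fun l => (k:ℕ) ≤ l ∧ l ≤ (i:ℕ))
      = Finset.Icc (k:ℕ) (i:ℕ) := by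
    ext l
    simp only [Finset.mem_filter, Finset.mem_range, Finset.mem_Icc]
    have := i.isLt
    omega
  rw [hfil]
  rcases Nat.lt_or_ge (i:ℕ) (k:ℕ) with h | h
  · rw [Finset.Icc_eq_empty_of_lt h, Finset.sum_empty, if_neg]
    intro he; rw [he] at h; omega
  · rw [← Finset.Ico_add_one_right_eq_Icc, Finset.sum_Ico_eq_sum_range]
    have hik : (i:ℕ) + 1 - (k:ℕ) = ((i:ℕ) - (k:ℕ)) + 1 := by omega
    rw [hik]
    have key2 : ∀ d ∈ Finset.range (((i:ℕ) - (k:ℕ)) + 1),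
        ((-1:ℤ)^((k:ℕ)+d+(k:ℕ)) *
            (((i:ℕ).choose ((k:ℕ)+d) : ℕ) * (((k:ℕ)+d).choose (k:ℕ) : ℕ) : ℕ) : ℤ)
          = ((i:ℕ).choose (k:ℕ) : ℤ) * ((-1)^d * (((i:ℕ)-(k:ℕ)).choose d : ℤ)) := by
      intro d hd
      rw [Finset.mem_range] at hd
      rw [Nat.choose_mul (by omega : (k:ℕ) ≤ (k:ℕ)+d)]
      have h1 : (k:ℕ)+d-(k:ℕ) = d := by omega
      have h2 : (-1:ℤ)^((k:ℕ)+d+(k:ℕ)) = (-1)^d := by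
        rw [show (k:ℕ)+d+(k:ℕ) = d + 2*(k:ℕ) by ring, pow_add, pow_mul]
        simp
      rw [h1, h2]; push_cast; ring
    rw [Finset.sum_congr rfl key2, ← Finset.mul_sum, Int.alternating_sum_range_choose]
    by_cases he : i = k
    · rw [if_pos he, he, if_pos (by omega : (k:ℕ)-(k:ℕ) = 0), Nat.choose_self]
      norm_num
    · rw [if_neg he, if_neg (by rw [Fin.ext_iff] at he; omega), mul_zero]

private lemma pas_det (m : ℕ) : (Pas m).det = 1 := by
  rw [Matrix.det_of_lowerTriangular (Pas m) (fun i k h => ?_)]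
  · simp [Pas, Nat.choose_self]
  · have : (i:ℕ) < (k:ℕ) := h
    simp [Pas, Nat.choose_eq_zero_of_lt this]

private lemma pas_adjugate (m : ℕ) : (Pas m).adjugate = PasInv m := by
  calc (Pas m).adjugate = (Pas m).adjugate * (Pas m * PasInv m) := by rw [pas_mul]; simp
    _ = ((Pas m).adjugate * Pas m) * PasInv m := by rw [mul_assoc]
    _ = PasInv m := by rw [Matrix.adjugate_mul, pas_det]; simp

private lemma pas_minor (m : ℕ) (jF tF : Fin (m+1)) :
    Matrix.det ((Pas m).submatrix jF.succAbove tF.succAbove)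
      = ((tF:ℕ).choose (jF:ℕ) : ℤ) := by
  have h := Matrix.adjugate_fin_succ_eq_det_submatrix (Pas m) tF jF
  rw [pas_adjugate] at h
  have hs : ((-1:ℤ)^((jF:ℕ)+(tF:ℕ))) * ((-1:ℤ)^((jF:ℕ)+(tF:ℕ))) = 1 := by
    rw [← pow_add, show (jF:ℕ)+(tF:ℕ)+((jF:ℕ)+(tF:ℕ)) = 2*((jF:ℕ)+(tF:ℕ)) by ring, pow_mul]
    simp
  have h2 : PasInv m tF jF
      = (-1)^((jF:ℕ)+(tF:ℕ)) * Matrix.det ((Pas m).submatrix jF.succAbove tF.succAbove) := by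
    rw [← h]
  calc Matrix.det ((Pas m).submatrix jF.succAbove tF.succAbove)
      = ((-1:ℤ)^((jF:ℕ)+(tF:ℕ)) * (-1:ℤ)^((jF:ℕ)+(tF:ℕ)))
          * Matrix.det ((Pas m).submatrix jF.succAbove tF.succAbove) := by rw [hs, one_mul]
    _ = (-1:ℤ)^((jF:ℕ)+(tF:ℕ)) * PasInv m tF jF := by rw [h2]; ring
    _ = ((tF:ℕ).choose (jF:ℕ) : ℤ) := by
        simp only [PasInv, Matrix.of_apply]
        rw [show (tF:ℕ)+(jF:ℕ) = (jF:ℕ)+(tF:ℕ) by ring, ← mul_assoc, hs, one_mul]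

private lemma val_succAbove {m : ℕ} (p : Fin (m+1)) (k : Fin m) :
    ((p.succAbove k : Fin (m+1)) : ℕ) = if (k:ℕ) < (p:ℕ) then (k:ℕ) else (k:ℕ)+1 := by
  rw [Fin.succAbove]
  by_cases h : k.castSucc < p
  · rw [if_pos h, if_pos (by exact_mod_cast h), Fin.coe_castSucc]
  · rw [if_neg h, if_neg (by rw [Fin.lt_def] at h; exact_mod_cast h), Fin.val_succ]

private lemma pas_minor' (m t j : ℕ) (ht : t ≤ m) (hj : j ≤ m) :
    Matrix.det (Matrix.of fun k l : Fin m => ((Jf m j k).choose (Jf m t l) : ℤ))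
      = (t.choose j : ℤ) := by
  have he : (Matrix.of fun k l : Fin m => ((Jf m j k).choose (Jf m t l) : ℤ))
      = (Pas m).submatrix (⟨j, by omega⟩ : Fin (m+1)).succAbove
          (⟨t, by omega⟩ : Fin (m+1)).succAbove := by
    ext k l
    simp only [Matrix.of_apply, Matrix.submatrix_apply, Pas]
    rw [val_succAbove, val_succAbove]
    rfl
  rw [he, pas_minor]

private lemma Jf_strictMono (m t : ℕ) : ∀ k l : Fin m, k < l → Jf m t k < Jf m t l := by
  intro k l h
  have : (k:ℕ) < (l:ℕ) := h
  unfold Jf; split_ifs <;> omega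

private lemma Jf_le (m t j : ℕ) (h : j ≤ t) : ∀ k, Jf m t k ≤ Jf m j k := by
  intro k; unfold Jf; split_ifs <;> omega

private lemma Jf_inj (m : ℕ) : Set.InjOn (Jf m) (Finset.Ico 0 (m+1)) := by
  have key : ∀ t t' : ℕ, t < t' → t' ≤ m → Jf m t ≠ Jf m t' := by
    intro t t' h h' he
    have ht : t < m := by omega
    have := congrFun he ⟨t, ht⟩
    unfold Jf at this
    simp only [Fin.val_mk] at this
    rw [if_neg (by omega), if_pos (by omega)] at this
    omega
  intro t ht t' ht' he
  simp only [Finset.coe_Ico, Set.mem_Ico] at ht ht'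
  rcases lt_trichotomy t t' with h | h | h
  · exact absurd he (key t t' h (by omega))
  · exact h
  · exact absurd he.symm (key t' t h (by omega))

/-- Classification: a strictly increasing `J ≤ Jf m j` equals some `Jf m t`, `j ≤ t ≤ m`. -/
private lemma classify {m j : ℕ} (hjm : j ≤ m) (J : Fin m → ℕ)
    (hmono : ∀ k l : Fin m, k < l → J k < J l) (hle : ∀ k, J k ≤ Jf m j k) :
    ∃ t, j ≤ t ∧ t ≤ m ∧ J = Jf m t := by
  have h1 : ∀ p (hp : p < m), p ≤ J ⟨p, hp⟩ := by
    intro p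
    induction p with
    | zero => exact fun _ => Nat.zero_le _
    | succ q ih =>
      intro hp
      have hq : q < m := by omega
      have ha : J ⟨q, hq⟩ < J ⟨q+1, hp⟩ := hmono _ _ (by rw [Fin.mk_lt_mk]; omega)
      have hb := ih hq
      omega
  have h2 : ∀ k : Fin m, J k ≤ (k:ℕ)+1 := by
    intro k
    have := hle k
    unfold Jf at this
    split_ifs at this <;> omega
  have h3 : ∀ k : Fin m, (k:ℕ) < j → J k = (k:ℕ) := by
    intro k hk
    have := hle k
    unfold Jf at this
    rw [if_pos hk] at this
    have := h1 (k:ℕ) k.isLt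
    simp only [Fin.eta] at this
    omega
  have h4 : ∀ p (hp : p < m) (hp1 : p+1 < m), J ⟨p, hp⟩ = p+1 → J ⟨p+1, hp1⟩ = p+2 := by
    intro p hp hp1 hJ
    have ha : J ⟨p, hp⟩ < J ⟨p+1, hp1⟩ := hmono _ _ (by rw [Fin.mk_lt_mk]; omega)
    have hb := h2 ⟨p+1, hp1⟩
    simp only [Fin.val_mk] at hb
    omega
  by_cases hall : ∀ k : Fin m, J k = (k:ℕ)
  · refine ⟨m, hjm, le_refl m, ?_⟩
    funext k
    rw [hall k]
    unfold Jf
    rw [if_pos k.isLt]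
  · push_neg at hall
    have hne : (Finset.univ.filter (fun k : Fin m => J k = (k:ℕ)+1)).Nonempty := by
      obtain ⟨k, hk⟩ := hall
      refine ⟨k, Finset.mem_filter.mpr ⟨Finset.mem_univ _, ?_⟩⟩
      have := h1 (k:ℕ) k.isLt
      simp only [Fin.eta] at this
      have := h2 k
      omega
    obtain ⟨t, htT, htmin⟩ : ∃ t ∈ Finset.univ.filter (fun k : Fin m => J k = (k:ℕ)+1),
        ∀ k ∈ Finset.univ.filter (fun k : Fin m => J k = (k:ℕ)+1), t ≤ k :=
      ⟨_, Finset.min'_mem _ hne, fun k hk => Finset.min'_le _ k hk⟩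
    have htmem : J t = (t:ℕ)+1 := (Finset.mem_filter.mp htT).2
    have hjt : j ≤ (t:ℕ) := by
      by_contra hc
      push_neg at hc
      have := h3 t hc
      omega
    refine ⟨(t:ℕ), hjt, by omega, ?_⟩
    have hup : ∀ d (hd : (t:ℕ)+d < m), J ⟨(t:ℕ)+d, hd⟩ = (t:ℕ)+d+1 := by
      intro d
      induction d with
      | zero =>
        intro hd
        show J ⟨(t:ℕ), hd⟩ = (t:ℕ)+1
        have : (⟨(t:ℕ), hd⟩ : Fin m) = t := Fin.ext rfl
        rw [this, htmem]
      | succ e ih =>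
        intro hd
        have hd' : (t:ℕ)+e < m := by omega
        show J ⟨(t:ℕ)+e+1, hd⟩ = (t:ℕ)+e+1+1
        exact h4 ((t:ℕ)+e) hd' hd (ih hd')
    funext k
    unfold Jf
    by_cases hk : (k:ℕ) < (t:ℕ)
    · rw [if_pos hk]
      by_contra hc
      have hk1 : J k = (k:ℕ)+1 := by
        have := h1 (k:ℕ) k.isLt
        simp only [Fin.eta] at this
        have := h2 k
        omega
      have := htmin k (Finset.mem_filter.mpr ⟨Finset.mem_univ _, hk1⟩)
      rw [Fin.le_def] at this
      omega
    · rw [if_neg hk]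
      have hd : (t:ℕ) + ((k:ℕ) - (t:ℕ)) < m := by have := k.isLt; omega
      have := hup ((k:ℕ) - (t:ℕ)) hd
      have he : (⟨(t:ℕ) + ((k:ℕ) - (t:ℕ)), hd⟩ : Fin m) = k := Fin.ext (by simp; omega)
      rw [he] at this
      rw [this]
      omega

private lemma psi_eval (m j : ℕ) (hj : j ≤ m) :
    psi m (Jf m j) = ((m+1).choose (j+1) : ℤ) := by
  unfold psi
  have hset : ((Fintype.piFinset fun _ : Fin m => Finset.range ((∑ k, Jf m j k) + 1)).filter
      (fun J => (∀ k l : Fin m, k < l → J k < J l) ∧ ∀ k, J k ≤ Jf m j k))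
      = (Finset.Ico j (m+1)).image (Jf m) := by
    ext J
    simp only [Finset.mem_filter, Fintype.mem_piFinset, Finset.mem_range, Finset.mem_image,
      Finset.mem_Ico]
    constructor
    · rintro ⟨-, hmono, hle⟩
      obtain ⟨t, h1, h2, h3⟩ := classify hj J hmono hle
      exact ⟨t, ⟨h1, by omega⟩, h3.symm⟩
    · rintro ⟨t, ⟨h1, h2⟩, rfl⟩
      refine ⟨fun k => ?_, Jf_strictMono m t, Jf_le m t j h1⟩
      have hb : Jf m t k ≤ Jf m j k := Jf_le m t j h1 k
      have hc : Jf m j k ≤ ∑ k', Jf m j k' :=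
        Finset.single_le_sum (fun k' _ => Nat.zero_le _) (Finset.mem_univ k)
      omega
  rw [hset, Finset.sum_image (fun t ht t' ht' he =>
    Jf_inj m
      (by simp only [Finset.coe_Ico, Set.mem_Ico]
          exact ⟨Nat.zero_le _, (Finset.mem_Ico.mp ht).2⟩)
      (by simp only [Finset.coe_Ico, Set.mem_Ico]
          exact ⟨Nat.zero_le _, (Finset.mem_Ico.mp ht').2⟩) he)]
  have hdet : ∀ t ∈ Finset.Ico j (m+1),
      Matrix.det (Matrix.of fun k l : Fin m => ((Jf m j k).choose (Jf m t l) : ℤ))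
        = (t.choose j : ℤ) := by
    intro t ht
    exact pas_minor' m t j (by have := (Finset.mem_Ico.mp ht).2; omega) hj
  rw [Finset.sum_congr rfl hdet, Finset.Ico_add_one_right_eq_Icc, ← Nat.cast_sum, Nat.sum_Icc_choose]

private lemma psi_congr {r r' : ℕ} (h : r = r') {I : Fin r → ℕ} {I' : Fin r' → ℕ}
    (hI : ∀ k : Fin r, I k = I' (Fin.cast h k)) : psi r I = psi r' I' := by
  subst h
  have : I = I' := funext fun k => hI k
  rw [this]

private lemma erase_card (m j : ℕ) (hj : j < m+1) :
    ((Finset.range (m+1)).erase j).card = m := by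
  rw [Finset.card_erase_of_mem (Finset.mem_range.mpr hj), Finset.card_range]
  omega

private lemma orderIso_erase (m j : ℕ) (hj : j < m+1)
    (k : Fin ((Finset.range (m+1)).erase j).card) :
    ((((Finset.range (m+1)).erase j).orderIsoOfFin rfl) k : ℕ)
      = Jf m j (Fin.cast (erase_card m j hj) k) := by
  have hcard : ((Finset.range (m+1)).erase j).card = m := erase_card m j hj
  have hmem : ∀ x : Fin ((Finset.range (m+1)).erase j).card,
      Jf m j (Fin.cast hcard x) ∈ (Finset.range (m+1)).erase j := by
    intro x
    have hx : ((Fin.cast hcard x : Fin m) : ℕ) < m := (Fin.cast hcard x).isLt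
    rw [Finset.mem_erase, Finset.mem_range]
    unfold Jf
    split_ifs <;> omega
  have hmono : StrictMono (fun x : Fin ((Finset.range (m+1)).erase j).card =>
      Jf m j (Fin.cast hcard x)) := by
    intro a b hab
    have hab' : (a:ℕ) < (b:ℕ) := hab
    unfold Jf
    simp only [Fin.coe_cast]
    split_ifs <;> omega
  have := Finset.orderEmbOfFin_unique
    (f := fun x : Fin ((Finset.range (m+1)).erase j).card => Jf m j (Fin.cast hcard x))
    (rfl : ((Finset.range (m+1)).erase j).card = ((Finset.range (m+1)).erase j).card) hmem hmono
  rw [Finset.coe_orderIsoOfFin_apply, ← this]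

/-- `LP_{(j)}(n) = ψ_{{0,…,n-1}∖{j}}` (and `0` for `j ≥ n`) equals `C(n, j+1)`. -/
theorem stmt16 (n j : ℕ) :
    (if j < n then psiF ((Finset.range n).erase j) else 0) = (n.choose (j + 1) : ℤ) := by
  by_cases hj : j < n
  · rw [if_pos hj]
    obtain ⟨m, rfl⟩ : ∃ m, n = m + 1 := ⟨n - 1, by omega⟩
    have hj' : j ≤ m := by omega
    rw [psiF, psi_congr (erase_card m j (by omega)) (fun k => orderIso_erase m j (by omega) k),
      psi_eval m j hj']
  · rw [if_neg hj, Nat.choose_eq_zero_of_lt (by omega)]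
    simp
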